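/- Let m ≥ 2 and k ≥ 1, and consider a deck of m^k cards with its in and out m-shuffles I_m and O_m. For 1 ≤ j ≤ k, define the shuffle B_j = O_m^{j−1} I_m O_m^{−j}, composed left to right (apply O_m^{j−1} first, then I_m, then O_m^{−j}). Then B_j flips exactly the j-th base-m digit: it sends the card with base-m index (x_1, …, x_k) to the position with base-m index (x_1, …, x_{j−1}, x̄_j, x_{j+1}, …, x_k), where x̄_j = (m−1) − x_j. -/

import Mathlib

namespace BjAux

/-- Value of a big-endian digit string. -/
def dval (m n : ℕ) (x : Fin n → ℕ) : ℕ := ∑ t, x t * m ^ (n - 1 - (t : ℕ))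

lemma dval_succ (m n : ℕ) (x : Fin (n + 1) → ℕ) :
    dval m (n + 1) x = x 0 * m ^ n + dval m n (x ∘ Fin.succ) := by
  rw [dval, Fin.sum_univ_succ]
  simp only [Fin.val_zero, Nat.add_sub_cancel, Nat.sub_zero, dval, Function.comp]
  congr 1
  apply Finset.sum_congr rfl
  intro t _
  congr 2
  simp [Fin.val_succ]
  omega

lemma dval_lt (m : ℕ) (hm : 1 ≤ m) :
    ∀ n (x : Fin n → ℕ), (∀ t, x t < m) → dval m n x < m ^ n := by
  intro n
  induction n with
  | zero => intro x hx; simp [dval]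
  | succ n ih =>
    intro x hx
    rw [dval_succ]
    have h1 : dval m n (x ∘ Fin.succ) < m ^ n := ih _ (fun t => hx _)
    have h2 : x 0 + 1 ≤ m := hx 0
    have : (x 0 + 1) * m ^ n ≤ m * m ^ n := Nat.mul_le_mul_right _ h2
    calc x 0 * m ^ n + dval m n (x ∘ Fin.succ) < x 0 * m ^ n + m ^ n := by omega
    _ = (x 0 + 1) * m ^ n := by ring
    _ ≤ m * m ^ n := this
    _ = m ^ (n + 1) := by ring

lemma dval_div (m n : ℕ) (hm : 1 ≤ m) (x : Fin (n + 1) → ℕ) (hx : ∀ t, x t < m) :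
    dval m (n + 1) x / m ^ n = x 0 := by
  rw [dval_succ, add_comm, Nat.add_mul_div_right _ _ (pow_pos hm n),
    Nat.div_eq_of_lt (dval_lt m hm n (x ∘ Fin.succ) (fun t => hx _)), zero_add]

lemma dval_mod (m n : ℕ) (hm : 1 ≤ m) (x : Fin (n + 1) → ℕ) (hx : ∀ t, x t < m) :
    dval m (n + 1) x % m ^ n = dval m n (x ∘ Fin.succ) := by
  rw [dval_succ, add_comm, Nat.add_mul_mod_self_right,
    Nat.mod_eq_of_lt (dval_lt m hm n (x ∘ Fin.succ) (fun t => hx _))]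

lemma shift_sum (m n : ℕ) (x : Fin (n + 1) → ℕ) :
    m * dval m n (x ∘ Fin.succ) + x 0 = dval m (n + 1) (fun t => x (t + 1)) := by
  rw [dval, dval, Fin.sum_univ_castSucc, Finset.mul_sum]
  have h0 : (Fin.last n + 1 : Fin (n + 1)) = 0 := Fin.last_add_one n
  rw [h0]
  simp only [Fin.val_last, Function.comp]
  congr 1
  · apply Finset.sum_congr rfl
    intro t _
    rw [Fin.coeSucc_eq_succ]
    have ht : (t : ℕ) < n := t.isLt
    have he : (n + 1 - 1 - (t.castSucc : ℕ)) = (n - 1 - (t : ℕ)) + 1 := by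
      simp [Fin.coe_castSucc]; omega
    rw [he, pow_succ]
    ring
  · simp

end BjAux
open BjAux
open Fin.NatCast
open Fin.CommRing
section
variable {m n : ℕ}

lemma O_step (hm : 2 ≤ m) (O : Equiv.Perm (Fin (m ^ (n + 1))))
    (hO : ∀ i : Fin (m ^ (n + 1)), (O i : ℕ) = m * ((i : ℕ) % m ^ n) + (i : ℕ) / m ^ n)
    (x : Fin (n + 1) → ℕ) (hx : ∀ t, x t < m) (i : Fin (m ^ (n + 1)))
    (hi : (i : ℕ) = dval m (n + 1) x) :
    (O i : ℕ) = dval m (n + 1) (fun t => x (t + 1)) := by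
  have hm1 : 1 ≤ m := by omega
  rw [hO, hi, dval_div m n hm1 x hx, dval_mod m n hm1 x hx, shift_sum]

lemma I_step (hm : 2 ≤ m) (I : Equiv.Perm (Fin (m ^ (n + 1))))
    (hI : ∀ i : Fin (m ^ (n + 1)), (I i : ℕ) = m * ((i : ℕ) % m ^ n) + (m - 1 - (i : ℕ) / m ^ n))
    (x : Fin (n + 1) → ℕ) (hx : ∀ t, x t < m) (i : Fin (m ^ (n + 1)))
    (hi : (i : ℕ) = dval m (n + 1) x) :
    (I i : ℕ) = dval m (n + 1) (fun t => (Function.update x 0 (m - 1 - x 0)) (t + 1)) := by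
  have hm1 : 1 ≤ m := by omega
  have h1 : (Function.update x 0 (m - 1 - x 0)) ∘ Fin.succ = x ∘ Fin.succ := by
    funext t
    simp [Function.update_of_ne (Fin.succ_ne_zero t)]
  rw [hI, hi, dval_div m n hm1 x hx, dval_mod m n hm1 x hx, ← shift_sum, h1,
    Function.update_self]

lemma Oinv_step (hm : 2 ≤ m) (O : Equiv.Perm (Fin (m ^ (n + 1))))
    (hO : ∀ i : Fin (m ^ (n + 1)), (O i : ℕ) = m * ((i : ℕ) % m ^ n) + (i : ℕ) / m ^ n)
    (x : Fin (n + 1) → ℕ) (hx : ∀ t, x t < m) (i : Fin (m ^ (n + 1)))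
    (hi : (i : ℕ) = dval m (n + 1) x) :
    ((O⁻¹) i : ℕ) = dval m (n + 1) (fun t => x (t - 1)) := by
  have hm1 : 1 ≤ m := by omega
  set i' : Fin (m ^ (n + 1)) :=
    ⟨dval m (n + 1) (fun t => x (t - 1)), dval_lt m hm1 (n + 1) _ (fun t => hx _)⟩ with hi'
  have h1 : O i' = i := by
    apply Fin.ext
    have := O_step hm O hO (fun t => x (t - 1)) (fun t => hx _) i' rfl
    rw [this, hi]
    congr 1
    funext t
    show x (t + 1 - 1) = x t
    rw [add_sub_cancel_right]
  rw [← h1, Equiv.Perm.inv_def, Equiv.symm_apply_apply]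

lemma Opow_step (hm : 2 ≤ m) (O : Equiv.Perm (Fin (m ^ (n + 1))))
    (hO : ∀ i : Fin (m ^ (n + 1)), (O i : ℕ) = m * ((i : ℕ) % m ^ n) + (i : ℕ) / m ^ n)
    (p : ℕ) :
    ∀ (x : Fin (n + 1) → ℕ), (∀ t, x t < m) → ∀ (i : Fin (m ^ (n + 1))),
      (i : ℕ) = dval m (n + 1) x →
      (((O ^ p) i : ℕ)) = dval m (n + 1) (fun t => x (t + (p : Fin (n + 1)))) := by
  induction p with
  | zero =>
    intro x hx i hi
    simp only [pow_zero, Equiv.Perm.coe_one, id_eq]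
    rw [hi]
    congr 1; funext t; push_cast; rw [add_zero]
  | succ p ih =>
    intro x hx i hi
    have h1 : (O ^ (p + 1)) i = O ((O ^ p) i) := by simp [pow_succ', Equiv.Perm.mul_apply]
    have h2 := O_step hm O hO (fun t => x (t + (p : Fin (n + 1)))) (fun t => hx _)
      ((O ^ p) i) (ih x hx i hi)
    rw [h1, h2]
    congr 1; funext t; congr 1; push_cast; ring

lemma Oinvpow_step (hm : 2 ≤ m) (O : Equiv.Perm (Fin (m ^ (n + 1))))
    (hO : ∀ i : Fin (m ^ (n + 1)), (O i : ℕ) = m * ((i : ℕ) % m ^ n) + (i : ℕ) / m ^ n)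
    (p : ℕ) :
    ∀ (x : Fin (n + 1) → ℕ), (∀ t, x t < m) → ∀ (i : Fin (m ^ (n + 1))),
      (i : ℕ) = dval m (n + 1) x →
      ((((O⁻¹) ^ p) i : ℕ)) = dval m (n + 1) (fun t => x (t - (p : Fin (n + 1)))) := by
  induction p with
  | zero =>
    intro x hx i hi
    simp only [pow_zero, Equiv.Perm.coe_one, id_eq]
    rw [hi]
    congr 1; funext t; push_cast; rw [sub_zero]
  | succ p ih =>
    intro x hx i hi
    have h1 : ((O⁻¹) ^ (p + 1)) i = O⁻¹ (((O⁻¹) ^ p) i) := by simp [pow_succ', Equiv.Perm.mul_apply]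
    have h2 := Oinv_step hm O hO (fun t => x (t - (p : Fin (n + 1)))) (fun t => hx _)
      (((O⁻¹) ^ p) i) (ih x hx i hi)
    rw [h1, h2]
    congr 1; funext t; congr 1; push_cast; ring

end

/-- For `m ≥ 2`, `k ≥ 1` and `1 ≤ j ≤ k`, the shuffle
`B_j = O^(j−1) I O^(−j)` (composed left to right, i.e. apply `O^(j−1)` first, then `I`, then
`O^(−j)`; in Mathlib's right-to-left convention this is `(O⁻¹)^j * I * O^(j−1)`) flips exactly
the `j`-th base-`m` digit: it sends the card with digits `(x_1, …, x_k)` to the position with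
digits `(x_1, …, x_{j−1}, (m−1)−x_j, x_{j+1}, …, x_k)`. -/
theorem B_j_flips_jth_digit (m k : ℕ) (hm : 2 ≤ m) (hk : 1 ≤ k)
    (O I : Equiv.Perm (Fin (m ^ k)))
    (hO : ∀ i : Fin (m ^ k),
      (O i : ℕ) = m * ((i : ℕ) % m ^ (k - 1)) + (i : ℕ) / m ^ (k - 1))
    (hI : ∀ i : Fin (m ^ k),
      (I i : ℕ) = m * ((i : ℕ) % m ^ (k - 1)) + (m - 1 - (i : ℕ) / m ^ (k - 1)))
    (j : ℕ) (hj1 : 1 ≤ j) (hjk : j ≤ k)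
    (B : Equiv.Perm (Fin (m ^ k))) (hB : B = (O⁻¹) ^ j * I * O ^ (j - 1)) :
    ∀ x : Fin k → ℕ, (∀ t, x t < m) →
      ∀ i : Fin (m ^ k), (i : ℕ) = ∑ t : Fin k, x t * m ^ (k - 1 - (t : ℕ)) →
        (B i : ℕ) = ∑ t : Fin k,
          (if (t : ℕ) = j - 1 then m - 1 - x t else x t) * m ^ (k - 1 - (t : ℕ)) := by
  obtain ⟨n, rfl⟩ : ∃ n, k = n + 1 := ⟨k - 1, by omega⟩
  simp only [Nat.add_sub_cancel] at hO hI
  intro x hx i hi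
  have hi' : (i : ℕ) = dval m (n + 1) x := hi
  have hBi : B i = ((O⁻¹) ^ j) (I ((O ^ (j - 1)) i)) := by
    rw [hB]; rfl
  -- digits after O^(j-1)
  set y : Fin (n + 1) → ℕ := fun t => x (t + ((j - 1 : ℕ) : Fin (n + 1))) with hy
  have hyb : ∀ t, y t < m := fun t => hx _
  have s1 : (((O ^ (j - 1)) i : ℕ)) = dval m (n + 1) y :=
    Opow_step hm O hO (j - 1) x hx i hi'
  -- digits after I
  set y' : Fin (n + 1) → ℕ := Function.update y 0 (m - 1 - y 0) with hy'
  have hy'b : ∀ t, y' t < m := by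
    intro t
    rcases eq_or_ne t 0 with h | h
    · rw [hy', h, Function.update_self]; omega
    · rw [hy', Function.update_of_ne h]; exact hyb t
  set z : Fin (n + 1) → ℕ := fun t => y' (t + 1) with hz
  have hzb : ∀ t, z t < m := fun t => hy'b _
  have s2 : ((I ((O ^ (j - 1)) i) : ℕ)) = dval m (n + 1) z :=
    I_step hm I hI y hyb _ s1
  have s3 : ((((O⁻¹) ^ j) (I ((O ^ (j - 1)) i)) : ℕ))
      = dval m (n + 1) (fun t => z (t - ((j : ℕ) : Fin (n + 1)))) :=
    Oinvpow_step hm O hO j z hzb _ s2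
  rw [hBi, s3]
  -- now a pure digit computation
  apply Finset.sum_congr rfl
  intro t _
  congr 1
  -- key : ↑j = ↑(j-1) + 1 in Fin (n+1)
  have hj : ((j : ℕ) : Fin (n + 1)) = ((j - 1 : ℕ) : Fin (n + 1)) + 1 := by
    have : j = (j - 1) + 1 := by omega
    rw [this]; push_cast; ring
  have harg : t - ((j : ℕ) : Fin (n + 1)) + 1 = t - ((j - 1 : ℕ) : Fin (n + 1)) := by
    rw [hj]; ring
  have hval : (((j - 1 : ℕ) : Fin (n + 1)) : ℕ) = j - 1 :=
    Fin.val_cast_of_lt (by omega)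
  show y' (t - ((j : ℕ) : Fin (n + 1)) + 1) = _
  rw [harg]
  rcases eq_or_ne ((t : ℕ)) (j - 1) with h | h
  · have ht : t = ((j - 1 : ℕ) : Fin (n + 1)) := by
      apply Fin.ext; rw [hval, h]
    rw [if_pos h, ht, sub_self, hy', Function.update_self, hy]
    simp only [zero_add]
  · have hne : t - ((j - 1 : ℕ) : Fin (n + 1)) ≠ 0 := by
      intro hc
      apply h
      have : t = ((j - 1 : ℕ) : Fin (n + 1)) := by
        have := sub_eq_zero.mp hc
        exact this
      rw [this, hval]
    rw [if_neg h, hy', Function.update_of_ne hne, hy]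
    simp only [sub_add_cancel]
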